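/- Let H : Matrix (ZMod 2) (ZMod 2) ℂ be the Hadamard matrix, H x y = (1 / Real.sqrt 2) * (-1 : ℂ) ^ ((x * y).val). Then (i) every entry of H is non-zero, so the only relation R : Set (ZMod 2 × ZMod 2) that is a sound abstraction of H is the full relation Set.univ; and (ii) H * H = 1, so the identity relation {(x, x') | x' = x} is a sound (indeed precise) abstraction of H * H. (Hence composition of sound abstractions is not precise: composing the abstractions of the two H gates yields the full relation, strictly coarser than the precise abstraction of H·H.) -/

import Mathlib

lemma sqrt2_ne' : (Real.sqrt 2 : ℂ) ≠ 0 := by norm_cast; positivity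

lemma sq2' : (Real.sqrt 2 : ℂ) * (Real.sqrt 2 : ℂ) = 2 := by
  norm_cast; rw [Real.mul_self_sqrt (by norm_num)]

/-- The Hadamard gate as a matrix on classical states of one qubit. -/
noncomputable def Hmat : Matrix (ZMod 2) (ZMod 2) ℂ :=
  fun x y => (1 / (Real.sqrt 2 : ℂ)) * (-1 : ℂ) ^ ((x * y).val)

lemma Hne : ∀ x y : ZMod 2, Hmat x y ≠ 0 := by
  intro x y
  exact mul_ne_zero (by simp [sqrt2_ne']) (pow_ne_zero _ (by norm_num))

lemma HH : Hmat * Hmat = 1 := by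
  ext x y
  rw [Matrix.mul_apply]
  rw [show (Finset.univ : Finset (ZMod 2)) = {0, 1} by decide,
    Finset.sum_pair (by decide)]
  obtain rfl | rfl : x = 0 ∨ x = 1 := by revert x; decide
  all_goals obtain rfl | rfl : y = 0 ∨ y = 1 := by revert y; decide
  all_goals
    simp [Hmat, Matrix.one_apply, show ZMod.val (1:ZMod 2) = 1 from rfl] <;>
    field_simp <;> rw [sq, sq2'] <;> ring

theorem hadamard_abstraction_imprecise :
    (∀ x y : ZMod 2, Hmat x y ≠ 0) ∧
      (∀ R : Set (ZMod 2 × ZMod 2),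
        (∀ x x' : ZMod 2, Hmat x' x ≠ 0 → (x, x') ∈ R) → R = Set.univ) ∧
      Hmat * Hmat = 1 ∧
      (∀ x x' : ZMod 2, (Hmat * Hmat) x' x ≠ 0 → (x, x') ∈ {p : ZMod 2 × ZMod 2 | p.2 = p.1}) ∧
      (∀ x x' : ZMod 2, (x, x') ∈ {p : ZMod 2 × ZMod 2 | p.2 = p.1} → (Hmat * Hmat) x' x ≠ 0) := by
  refine ⟨Hne, ?_, HH, ?_, ?_⟩
  · intro R h
    ext ⟨x, x'⟩
    simp only [Set.mem_univ, iff_true]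
    exact h x x' (Hne x' x)
  · intro x x' h
    rw [HH] at h
    by_contra hne
    exact h (Matrix.one_apply_ne (by simpa using hne))
  · intro x x' h
    simp only [Set.mem_setOf_eq] at h
    rw [HH, h, Matrix.one_apply_eq]
    norm_num
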